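/- Let ℓ: R₂ → ℝ be a linear functional on the degree-2 part of a real graded ring, expressed as ℓ = Σᵢ aᵢ ev_{pᵢ} + Σⱼ (zⱼ ev_{qⱼ} + conj(zⱼ) ev_{conj(qⱼ)}) where the aᵢ are real numbers, the pᵢ are real points, the zⱼ are complex numbers, and the qⱼ are nonreal points. If r₊ and r₋ denote the number of positive and negative numbers among the aᵢ and c is the number of conjugate pairs, then the associated real quadratic form φ_ℓ(f) = ℓ(f²) on R₁ has at most r₊ + c positive eigenvalues and at most r₋ + c negative eigenvalues. -/

import Mathlib

open Finset

/-- A point of `ℙⁿ` given by an affine representative `q : Fin (n+1) → ℂ` is real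
iff it admits a representative which is a complex multiple of a real vector. -/
def IsRealPoint {n : ℕ} (q : Fin (n + 1) → ℂ) : Prop :=
  ∃ (w : ℂ) (v : Fin (n + 1) → ℝ), q = fun k => w * (v k : ℂ)


lemma mulVec_form {m : ℕ} (M : Matrix (Fin m) (Fin m) ℝ) (hM : M.IsHermitian)
    (x : EuclideanSpace ℝ (Fin m)) :
    dotProduct x (M.mulVec x) =
      ∑ i, hM.eigenvalues i * (hM.eigenvectorBasis.repr x i) ^ 2 := by
  classical
  set b := hM.eigenvectorBasis with hb
  have hMx : M.mulVec x = ∑ j, (hM.eigenvalues j * b.repr x j) • (b j : EuclideanSpace ℝ (Fin m)) := by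
    conv_lhs => rw [← b.sum_repr x]
    rw [WithLp.ofLp_sum, WithLp.ofLp_sum, ← Matrix.mulVecLin_apply, map_sum]
    refine Finset.sum_congr rfl fun j _ => ?_
    rw [WithLp.ofLp_smul, WithLp.ofLp_smul, _root_.map_smul, Matrix.mulVecLin_apply]
    rw [hM.mulVec_eigenvectorBasis j]
    rw [smul_smul, mul_comm]
  have hrepr : ∀ i, b.repr (WithLp.toLp 2 (M.mulVec x)) i = hM.eigenvalues i * b.repr x i := by
    intro i
    rw [hMx, WithLp.toLp_ofLp, map_sum]
    have : ∀ j, b.repr ((hM.eigenvalues j * b.repr x j) • (b j : EuclideanSpace ℝ (Fin m)))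
        = (hM.eigenvalues j * b.repr x j) • EuclideanSpace.single j (1:ℝ) := by
      intro j; rw [_root_.map_smul, b.repr_self]
    simp only [this]
    rw [show ((∑ j : Fin m, (hM.eigenvalues j * b.repr x j) • EuclideanSpace.single j (1:ℝ)) i)
        = ∑ j : Fin m, ((hM.eigenvalues j * b.repr x j) • EuclideanSpace.single j (1:ℝ)) i from
      by rw [WithLp.ofLp_sum]; exact Finset.sum_apply i Finset.univ _]
    simp only [PiLp.smul_apply, EuclideanSpace.single_apply, smul_eq_mul, mul_ite, mul_one,
      mul_zero]
    simp
  have hinner : dotProduct x (M.mulVec x) = inner (𝕜 := ℝ) x (WithLp.toLp 2 (M.mulVec x)) := by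
    rw [PiLp.inner_apply]
    simp [dotProduct, RCLike.inner_apply, mul_comm]
  rw [hinner, ← b.repr.inner_map_map x (WithLp.toLp 2 (M.mulVec x)), PiLp.inner_apply]
  refine Finset.sum_congr rfl fun i _ => ?_
  rw [hrepr i]
  simp [RCLike.inner_apply]
  ring


lemma core {m : ℕ} (M : Matrix (Fin m) (Fin m) ℝ) (hM : M.IsHermitian) (ε : ℝ)
    (S : Finset (Fin m)) (hS : ∀ i ∈ S, 0 < ε * hM.eigenvalues i)
    (W : Submodule ℝ (EuclideanSpace ℝ (Fin m)))
    (hW : ∀ x ∈ W, ε * dotProduct x (M.mulVec x) ≤ 0)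
    (hform : ∀ x : EuclideanSpace ℝ (Fin m), dotProduct x (M.mulVec x) =
      ∑ i, hM.eigenvalues i * (hM.eigenvectorBasis.repr x i) ^ 2) :
    S.card + Module.finrank ℝ W ≤ m := by
  classical
  set b := hM.eigenvectorBasis with hb
  set V : Submodule ℝ (EuclideanSpace ℝ (Fin m)) :=
    Submodule.span ℝ (Set.range fun i : {i // i ∈ S} => b ↑i) with hV
  have hli : LinearIndependent ℝ (fun i : {i // i ∈ S} => b ↑i) :=
    b.orthonormal.linearIndependent.comp _ Subtype.val_injective
  have hdim : Module.finrank ℝ V = S.card := by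
    rw [hV, finrank_span_eq_card hli, Fintype.card_coe]
  have hmem : ∀ x ∈ V, ∀ i, i ∉ S → b.repr x i = 0 := by
    intro x hx i hi
    refine Submodule.span_induction ?_ ?_ ?_ ?_ hx
    · rintro _ ⟨j, rfl⟩
      rw [b.repr_self]
      rw [EuclideanSpace.single_apply]
      simp only [ite_eq_right_iff]
      intro h; exact absurd (h ▸ j.2) hi
    · simp
    · intro u v _ _ hu hv
      rw [map_add]
      simp [hu, hv]
    · intro t u _ hu
      rw [_root_.map_smul]
      simp [hu]
  have hpos : ∀ x ∈ V, x ≠ 0 → 0 < ε * dotProduct x (M.mulVec x) := by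
    intro x hxV hx0
    rw [hform x, Finset.mul_sum]
    obtain ⟨i₀, hi₀⟩ : ∃ i, b.repr x i ≠ 0 := by
      by_contra h
      push_neg at h
      apply hx0
      apply b.repr.injective
      rw [map_zero]
      ext i
      simpa using h i
    have hi₀S : i₀ ∈ S := by
      by_contra hiS; exact hi₀ (hmem x hxV i₀ hiS)
    refine Finset.sum_pos' (fun i _ => ?_) ⟨i₀, Finset.mem_univ i₀, ?_⟩
    · by_cases hi : i ∈ S
      · nlinarith [hS i hi, sq_nonneg (b.repr x i)]
      · rw [hmem x hxV i hi]; simp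
    · have h1 := hS i₀ hi₀S
      have h2 : 0 < b.repr x i₀ ^ 2 :=
        lt_of_le_of_ne (sq_nonneg _) (Ne.symm (pow_ne_zero 2 hi₀))
      nlinarith
  have hVW : V ⊓ W = ⊥ := by
    rw [Submodule.eq_bot_iff]
    rintro x ⟨hxV, hxW⟩
    by_contra hx0
    exact absurd (hW x hxW) (not_le.mpr (hpos x hxV hx0))
  have hsum := Submodule.finrank_sup_add_finrank_inf_eq V W
  rw [hVW, finrank_bot, add_zero] at hsum
  have hle : Module.finrank ℝ ↥(V ⊔ W) ≤ m := by
    have := Submodule.finrank_le (V ⊔ W)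
    rwa [finrank_euclideanSpace_fin] at this
  omega


lemma quad_sign (z ν Q : ℂ) (hν : ν ≠ 0)
    (h : (Complex.I * (starRingEnd ℂ) ν * Q).re = 0) :
    ∃ t : ℝ, 0 ≤ t ∧ (2 * z * Q ^ 2).re = t * (z * ν ^ 2).re := by
  set s := ((starRingEnd ℂ) ν * Q).re with hs
  have him : ((starRingEnd ℂ) ν * Q).im = 0 := by
    rw [mul_assoc] at h
    simp only [Complex.I_mul_re] at h
    linarith [h]
  have hw : (starRingEnd ℂ) ν * Q = (s : ℂ) := by
    apply Complex.ext <;> simp [hs, him]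
  have hνc : (starRingEnd ℂ) ν ≠ 0 := by simpa using hν
  have hQ : Q = (s : ℂ) * ((starRingEnd ℂ) ν)⁻¹ := by
    field_simp
    rw [mul_comm] at hw
    exact hw
  have hnsq : (0:ℝ) < Complex.normSq ν := Complex.normSq_pos.mpr hν
  refine ⟨2 * s ^ 2 / (Complex.normSq ν) ^ 2, by positivity, ?_⟩
  have key : 2 * z * Q ^ 2 = ((2 * s ^ 2 / (Complex.normSq ν) ^ 2 : ℝ) : ℂ) * (z * ν ^ 2) := by
    rw [hQ]
    have hinv : ((starRingEnd ℂ) ν)⁻¹ = ν * ((Complex.normSq ν : ℂ))⁻¹ := by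
      rw [Complex.inv_def]
      simp [Complex.normSq_conj]
    rw [hinv]
    have : ((Complex.normSq ν : ℝ) : ℂ) ≠ 0 := by exact_mod_cast hnsq.ne'
    push_cast
    field_simp
  rw [key, Complex.re_ofReal_mul]


def evR {m : ℕ} (v : Fin m → ℝ) : EuclideanSpace ℝ (Fin m) →ₗ[ℝ] ℝ where
  toFun x := ∑ j, v j * x j
  map_add' x y := by
    simp only [PiLp.add_apply, mul_add]
    rw [Finset.sum_add_distrib]
  map_smul' t x := by
    simp only [PiLp.smul_apply, smul_eq_mul, RingHom.id_apply]
    rw [Finset.mul_sum]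
    exact Finset.sum_congr rfl fun j _ => by ring

noncomputable def evC {m : ℕ} (w : ℂ) (v : Fin m → ℂ) : EuclideanSpace ℝ (Fin m) →ₗ[ℝ] ℝ where
  toFun x := (w * ∑ j, v j * (x j : ℂ)).re
  map_add' x y := by
    have : (∑ j, v j * ((x + y) j : ℂ)) = (∑ j, v j * (x j : ℂ)) + ∑ j, v j * (y j : ℂ) := by
      rw [← Finset.sum_add_distrib]
      refine Finset.sum_congr rfl fun j _ => ?_
      simp only [PiLp.add_apply]
      push_cast
      ring
    simp only [this, mul_add, Complex.add_re]
  map_smul' t x := by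
    have : (∑ j, v j * ((t • x) j : ℂ)) = (t : ℂ) * ∑ j, v j * (x j : ℂ) := by
      rw [Finset.mul_sum]
      refine Finset.sum_congr rfl fun j _ => ?_
      simp only [PiLp.smul_apply, smul_eq_mul]
      push_cast
      ring
    simp only [this, RingHom.id_apply]
    rw [show w * ((t:ℂ) * ∑ j, v j * (x j : ℂ)) = (t:ℂ) * (w * ∑ j, v j * (x j : ℂ)) by ring]
    rw [Complex.re_ofReal_mul]
    simp

lemma form_expand {m r c : ℕ} (a : Fin r → ℝ) (p : Fin r → Fin m → ℝ)
    (z : Fin c → ℂ) (q : Fin c → Fin m → ℂ)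
    (M : Matrix (Fin m) (Fin m) ℝ)
    (hMdef : ∀ j k, M j k =
      (∑ i, a i * p i j * p i k) + ∑ l, (2 * (z l * q l j * q l k)).re)
    (x : Fin m → ℝ) :
    dotProduct x (M.mulVec x) =
      (∑ i, a i * (∑ j, p i j * x j) ^ 2) +
      ∑ l, (2 * z l * (∑ j, q l j * (x j : ℂ)) ^ 2).re := by
  have h1 : dotProduct x (M.mulVec x) = ∑ j, ∑ k, M j k * (x j * x k) := by
    rw [dotProduct]
    refine Finset.sum_congr rfl fun j _ => ?_
    rw [Matrix.mulVec, dotProduct, Finset.mul_sum]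
    refine Finset.sum_congr rfl fun k _ => by ring
  rw [h1]
  have h2 : ∀ j k, M j k * (x j * x k) =
      (∑ i, a i * p i j * p i k * (x j * x k)) +
      ∑ l, ((2 * (z l * q l j * q l k)).re * (x j * x k)) := by
    intro j k
    rw [hMdef j k, add_mul, Finset.sum_mul, Finset.sum_mul]
  simp only [h2, Finset.sum_add_distrib]
  congr 1
  · calc ∑ j, ∑ k, ∑ i, a i * p i j * p i k * (x j * x k)
        = ∑ j, ∑ i, ∑ k, a i * p i j * p i k * (x j * x k) :=
          Finset.sum_congr rfl fun j _ => Finset.sum_comm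
      _ = ∑ i, ∑ j, ∑ k, a i * p i j * p i k * (x j * x k) := Finset.sum_comm
      _ = ∑ i, a i * (∑ j, p i j * x j) ^ 2 := by
          refine Finset.sum_congr rfl fun i _ => ?_
          rw [sq, Finset.sum_mul_sum, Finset.mul_sum]
          refine Finset.sum_congr rfl fun j _ => ?_
          rw [Finset.mul_sum]
          exact Finset.sum_congr rfl fun k _ => by ring
  · rw [show (∑ j, ∑ k, ∑ l, (2 * (z l * q l j * q l k)).re * (x j * x k))
        = ∑ l, (2 * z l * (∑ j, q l j * (x j : ℂ)) ^ 2).re from ?_]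
    calc ∑ j, ∑ k, ∑ l, (2 * (z l * q l j * q l k)).re * (x j * x k)
        = ∑ j, ∑ l, ∑ k, (2 * (z l * q l j * q l k)).re * (x j * x k) :=
          Finset.sum_congr rfl fun j _ => Finset.sum_comm
      _ = ∑ l, ∑ j, ∑ k, (2 * (z l * q l j * q l k)).re * (x j * x k) := Finset.sum_comm
      _ = ∑ l, (2 * z l * (∑ j, q l j * (x j : ℂ)) ^ 2).re := by
          refine Finset.sum_congr rfl fun l _ => ?_
          have hQ : 2 * z l * (∑ j, q l j * (x j:ℂ)) ^ 2
              = ∑ j, ∑ k, ((x j * x k : ℝ) : ℂ) * (2 * (z l * q l j * q l k)) := by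
            rw [sq, Finset.sum_mul_sum, Finset.mul_sum]
            refine Finset.sum_congr rfl fun j _ => ?_
            rw [Finset.mul_sum]
            exact Finset.sum_congr rfl fun k _ => by push_cast; ring
          rw [hQ, Complex.re_sum]
          refine Finset.sum_congr rfl fun j _ => ?_
          rw [Complex.re_sum]
          refine Finset.sum_congr rfl fun k _ => ?_
          rw [Complex.re_ofReal_mul]
          ring
    rfl


lemma bound_side {m r c : ℕ} (a : Fin r → ℝ) (p : Fin r → Fin m → ℝ)
    (z : Fin c → ℂ) (q : Fin c → Fin m → ℂ)
    (M : Matrix (Fin m) (Fin m) ℝ)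
    (hMdef : ∀ j k, M j k =
      (∑ i, a i * p i j * p i k) + ∑ l, (2 * (z l * q l j * q l k)).re)
    (hM : M.IsHermitian) (ε : ℝ)
    (ν : Fin c → ℂ) (hν : ∀ l, z l ≠ 0 → ν l ≠ 0)
    (hνsq : ∀ l, ε * (z l * ν l ^ 2).re ≤ 0) :
    (univ.filter fun i => 0 < ε * hM.eigenvalues i).card ≤
      (univ.filter fun i => 0 < ε * a i).card + c := by
  classical
  set G : EuclideanSpace ℝ (Fin m) →ₗ[ℝ] ({i : Fin r // 0 < ε * a i} → ℝ) × (Fin c → ℝ) :=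
    LinearMap.prod (LinearMap.pi fun i : {i : Fin r // 0 < ε * a i} => evR (p i))
      (LinearMap.pi fun l => evC (Complex.I * (starRingEnd ℂ) (ν l)) (q l)) with hG
  set W := LinearMap.ker G with hWdef
  have hW : ∀ x ∈ W, ε * dotProduct x (M.mulVec x) ≤ 0 := by
    intro x hx
    have hGx : G x = 0 := LinearMap.mem_ker.mp hx
    have h1 : ∀ i : {i : Fin r // 0 < ε * a i}, (∑ j, p i j * x j) = 0 := by
      intro i
      have := congrFun (congrArg Prod.fst hGx) i
      exact this
    have h2 : ∀ l, (Complex.I * (starRingEnd ℂ) (ν l) * ∑ j, q l j * (x j : ℂ)).re = 0 := by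
      intro l
      have := congrFun (congrArg Prod.snd hGx) l
      exact this
    rw [form_expand a p z q M hMdef x, mul_add]
    apply add_nonpos
    · rw [Finset.mul_sum]
      apply Finset.sum_nonpos
      intro i _
      by_cases hi : 0 < ε * a i
      · rw [h1 ⟨i, hi⟩]
        simp
      · have h0 : ε * a i ≤ 0 := le_of_not_gt hi
        nlinarith [sq_nonneg (∑ j, p i j * x j)]
    · rw [Finset.mul_sum]
      apply Finset.sum_nonpos
      intro l _
      by_cases hz : z l = 0
      · simp [hz]
      · obtain ⟨t, ht0, hteq⟩ := quad_sign (z l) (ν l) _ (hν l hz) (h2 l)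
        rw [hteq]
        nlinarith [hνsq l]
  have hcore := core M hM ε (univ.filter fun i => 0 < ε * hM.eigenvalues i)
    (fun i hi => (Finset.mem_filter.mp hi).2) W hW (fun x => mulVec_form M hM x)
  have hrn := LinearMap.finrank_range_add_finrank_ker G
  rw [finrank_euclideanSpace_fin, ← hWdef] at hrn
  have hrange : Module.finrank ℝ (LinearMap.range G) ≤
      (univ.filter fun i => 0 < ε * a i).card + c := by
    have h := Submodule.finrank_le (LinearMap.range G)
    rw [Module.finrank_prod, Module.finrank_pi, Module.finrank_pi] at h
    simpa [Fintype.card_subtype] using h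
  omega

/-- If the linear functional `ℓ` on the degree-2 part is
`ℓ = Σᵢ aᵢ ev_{pᵢ} + Σⱼ (zⱼ ev_{qⱼ} + conj(zⱼ) ev_{conj qⱼ})` with `aᵢ` real, `pᵢ`
real points, `zⱼ` complex and `qⱼ` nonreal points, then the symmetric matrix `M`
of the quadratic form `φ_ℓ(f) = ℓ(f²)` on linear forms, whose entries are
`M j k = Σᵢ aᵢ pᵢ(j)pᵢ(k) + Σₗ 2 Re(zₗ qₗ(j) qₗ(k))`, has at most `r₊ + c`
positive eigenvalues and at most `r₋ + c` negative eigenvalues, where `r₊`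
(resp. `r₋`) is the number of positive (resp. negative) `aᵢ`. -/
theorem stmt_0 (n r c : ℕ)
    (a : Fin r → ℝ) (p : Fin r → Fin (n + 1) → ℝ)
    (z : Fin c → ℂ) (q : Fin c → Fin (n + 1) → ℂ)
    (hq : ∀ l, ¬ IsRealPoint (q l))
    (M : Matrix (Fin (n + 1)) (Fin (n + 1)) ℝ)
    (hMdef : ∀ j k, M j k =
      (∑ i, a i * p i j * p i k) + ∑ l, (2 * (z l * q l j * q l k)).re)
    (hM : M.IsHermitian) :
    (univ.filter fun i => 0 < hM.eigenvalues i).card ≤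
      (univ.filter fun i => 0 < a i).card + c ∧
    (univ.filter fun i => hM.eigenvalues i < 0).card ≤
      (univ.filter fun i => a i < 0).card + c := by
  classical
  have hex : ∀ u : ℂ, ∃ ν : ℂ, ν ^ 2 = u := fun u =>
    IsAlgClosed.exists_pow_nat_eq u (by norm_num)
  choose νp hνp using fun l => hex (-(starRingEnd ℂ) (z l))
  choose νm hνm using fun l => hex ((starRingEnd ℂ) (z l))
  constructor
  · have hb := bound_side a p z q M hMdef hM 1 νp
      (fun l hl h0 => by
        apply hl
        have := hνp l
        rw [h0] at this
        simpa using this.symm)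
      (fun l => by
        rw [hνp l, one_mul]
        have : z l * -(starRingEnd ℂ) (z l) = -((Complex.normSq (z l) : ℝ) : ℂ) := by
          rw [mul_neg, Complex.mul_conj]
        rw [this]
        simp [Complex.normSq_nonneg])
    have e1 : (univ.filter fun i => 0 < (1:ℝ) * hM.eigenvalues i) =
        (univ.filter fun i => 0 < hM.eigenvalues i) :=
      Finset.filter_congr fun i _ => by rw [one_mul]
    have e2 : (univ.filter fun i => 0 < (1:ℝ) * a i) =
        (univ.filter fun i => 0 < a i) :=
      Finset.filter_congr fun i _ => by rw [one_mul]
    rwa [e1, e2] at hb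
  · have hb := bound_side a p z q M hMdef hM (-1) νm
      (fun l hl h0 => by
        apply hl
        have := hνm l
        rw [h0] at this
        simpa using this.symm)
      (fun l => by
        rw [hνm l]
        rw [Complex.mul_conj]
        simp [Complex.normSq_nonneg])
    have e1 : (univ.filter fun i => 0 < (-1:ℝ) * hM.eigenvalues i) =
        (univ.filter fun i => hM.eigenvalues i < 0) :=
      Finset.filter_congr fun i _ => by constructor <;> intro h <;> nlinarith
    have e2 : (univ.filter fun i => 0 < (-1:ℝ) * a i) =
        (univ.filter fun i => a i < 0) :=
      Finset.filter_congr fun i _ => by constructor <;> intro h <;> nlinarith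
    rwa [e1, e2] at hb
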